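/- The class of APC languages (level 3/2 of the Straubing-Thérien hierarchy) is closed under commutative closure: if L = union over i of Sigma_0^{(i)*} a_1^{(i)} Sigma_1^{(i)*} ... a_{n_i}^{(i)} Sigma_{n_i}^{(i)*}, then perm(L) = union over i of ( perm(a_1^{(i)} ... a_{n_i}^{(i)}) shuffled with Gamma^{(i)*} ), where Gamma^{(i)} is the union of Sigma_0^{(i)},...,Sigma_{n_i}^{(i)}; in particular perm(L) is again an APC. -/

import Mathlib

open List

/-- Commutative (permutation) closure of a language. -/
def permCl {α : Type} (L : Language α) : Language α := {w | ∃ v ∈ L, w.Perm v}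

/-- A path in an NFA from a state to a state, labeled by a word, visiting the given
list of states. -/
inductive NPath {α σ : Type} (M : NFA α σ) : σ → List α → σ → List σ → Prop
  | nil (q : σ) : NPath M q [] q [q]
  | cons {q q' p : σ} {a : α} {w : List α} {qs : List σ} :
      q' ∈ M.step q a → NPath M q' w p qs → NPath M q (a :: w) p (q :: qs)

/-- The set of words labeling simple accepting paths (no repeated state). -/
def Lsimple {α σ : Type} (M : NFA α σ) : Language α :=
  {w | ∃ s ∈ M.start, ∃ f ∈ M.accept, ∃ qs, NPath M s w f qs ∧ qs.Nodup}

/-- Reachability between states of an NFA. -/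
def Reach {α σ : Type} (M : NFA α σ) (p q : σ) : Prop := ∃ w : List α, q ∈ M.evalFrom {p} w

/-- A partially ordered (weakly acyclic) NFA: reachability is antisymmetric,
equivalently the only loops are self-loops. -/
def PartiallyOrdered {α σ : Type} (M : NFA α σ) : Prop :=
  ∀ p q, Reach M p q → Reach M q p → p = q

/-- A partial deterministic finite automaton viewed as an NFA. -/
def IsPDFA {α σ : Type} (M : NFA α σ) : Prop :=
  M.start.Subsingleton ∧ ∀ q a, (M.step q a).Subsingleton

/-- `L` is recognized by a deterministic finite automaton with at most `N` states. -/
def RecognizableWithin {α : Type} (L : Language α) (N : ℕ) : Prop :=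
  ∃ (σ : Type) (_ : Fintype σ) (D : DFA α σ), Fintype.card σ ≤ N ∧ D.accepts = L

/-- `IsShuffle u v w` : `w` is an interleaving of `u` and `v`. -/
inductive IsShuffle {α : Type} : List α → List α → List α → Prop
  | nil : IsShuffle [] [] []
  | left {u v w : List α} {a : α} : IsShuffle u v w → IsShuffle (a :: u) v (a :: w)
  | right {u v w : List α} {a : α} : IsShuffle u v w → IsShuffle u (a :: v) (a :: w)

/-- Shuffle of two languages. -/
def lshuffle {α : Type} (U V : Language α) : Language α :=
  {w | ∃ u ∈ U, ∃ v ∈ V, IsShuffle u v w}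

/-- Iterated shuffle of a list of languages. -/
def shuffleList {α : Type} : List (Language α) → Language α
  | [] => {[]}
  | L :: Ls => lshuffle L (shuffleList Ls)

/-- Unary projection of a language onto the letter `a`. -/
def proj {α : Type} [DecidableEq α] (a : α) (L : Language α) : Language α :=
  (fun u => List.replicate (u.count a) a) '' L

/-- A strict shuffle language: it equals the shuffle of its unary projections over
the whole alphabet. -/
def IsStrictShuffle {α : Type} [Fintype α] [DecidableEq α] (L : Language α) : Prop :=
  L = shuffleList ((Finset.univ : Finset α).toList.map (fun a => proj a L))

/-- `Γ^*` : all words over the subalphabet `Γ`. -/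
def subStar {α : Type} (Γ : Set α) : Language α := {w | ∀ x ∈ w, x ∈ Γ}

/-- The APC atom `Σ₀^* a₁ Σ₁^* ⋯ aₙ Σₙ^*`, given by the initial subalphabet and the
list of pairs `(aᵢ, Σᵢ)`. -/
def apcAtom {α : Type} (Γ0 : Set α) : List (α × Set α) → Language α
  | [] => subStar Γ0
  | (a, Γ) :: rest => subStar Γ0 * (({[a]} : Language α) * apcAtom Γ rest)

/-- An Alphabetical Pattern Constraint language: a finite union of APC atoms. -/
def IsAPC {α : Type} (L : Language α) : Prop :=
  ∃ parts : List (Set α × List (α × Set α)),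
    L = {w | ∃ p ∈ parts, w ∈ apcAtom p.1 p.2}

lemma shuffle_perm_aux {α : Type} {u v w : List α} (h : IsShuffle u v w) :
    w.Perm (u ++ v) := by
  induction h with
  | nil => simp
  | left h ih => exact ih.cons _
  | right h ih => exact (ih.cons _).trans List.perm_middle.symm

lemma perm_append_shuffle_aux {α : Type} : ∀ {w u v : List α}, w.Perm (u ++ v) →
    ∃ u' v', u'.Perm u ∧ v'.Perm v ∧ IsShuffle u' v' w := by
  intro w
  induction w with
  | nil =>
    intro u v h
    have := h.symm.eq_nil
    rcases List.append_eq_nil_iff.1 this with ⟨rfl, rfl⟩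
    exact ⟨[], [], .rfl, .rfl, .nil⟩
  | cons a w ih =>
    intro u v h
    have ha : a ∈ u ++ v := h.mem_iff.1 (List.mem_cons_self)
    rcases List.mem_append.1 ha with hu | hv
    · rcases List.append_of_mem hu with ⟨u1, u2, rfl⟩
      have h' : (a :: w).Perm (a :: (u1 ++ u2 ++ v)) := by
        refine h.trans ?_
        calc (u1 ++ a :: u2) ++ v = u1 ++ a :: (u2 ++ v) := by simp
        _ ~ a :: (u1 ++ (u2 ++ v)) := List.perm_middle
        _ = a :: (u1 ++ u2 ++ v) := by simp
      rcases ih (h'.cons_inv) with ⟨u', v', hu', hv', hs⟩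
      exact ⟨a :: u', v', ((hu'.cons a).trans
        (by simpa using (List.perm_middle (a := a) (l₁ := u1) (l₂ := u2)).symm)),
        hv', .left hs⟩
    · rcases List.append_of_mem hv with ⟨v1, v2, rfl⟩
      have h' : (a :: w).Perm (a :: (u ++ (v1 ++ v2))) := by
        refine h.trans ?_
        calc u ++ (v1 ++ a :: v2) = (u ++ v1) ++ a :: v2 := by simp
        _ ~ a :: ((u ++ v1) ++ v2) := List.perm_middle
        _ = a :: (u ++ (v1 ++ v2)) := by simp
      rcases ih (h'.cons_inv) with ⟨u', v', hu', hv', hs⟩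
      exact ⟨u', a :: v', hu', ((hv'.cons a).trans List.perm_middle.symm), .right hs⟩

lemma swap_append_perm_aux {α : Type} (x s v : List α) :
    (x ++ (s ++ v)).Perm (s ++ (x ++ v)) := by
  rw [← List.append_assoc, ← List.append_assoc]
  exact List.perm_append_comm.append_right v

/-- Characterization (forward): a word in an APC atom is a permutation of the marker
word followed by a word over the union alphabet. -/
lemma atom_perm_aux {α : Type} : ∀ {rest : List (α × Set α)} {Γ0 : Set α} {w : List α},
    w ∈ apcAtom Γ0 rest →
    ∃ v, w.Perm (rest.map Prod.fst ++ v) ∧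
      ∀ x ∈ v, x ∈ Γ0 ∪ {x | ∃ q ∈ rest, x ∈ q.2} := by
  intro rest
  induction rest with
  | nil =>
    intro Γ0 w hw
    exact ⟨w, by simp, fun x hx => Or.inl (hw x hx)⟩
  | cons p rest ih =>
    rcases p with ⟨a, Γ1⟩
    intro Γ0 w hw
    rcases hw with ⟨x, hx, y, hy, rfl⟩
    rcases hy with ⟨y1, hy1, z, hz, rfl⟩
    rcases hy1 with rfl
    rcases ih hz with ⟨v', hperm, hv'⟩
    refine ⟨x ++ v', ?_, ?_⟩
    · calc x ++ ([a] ++ z) ~ x ++ ([a] ++ (rest.map Prod.fst ++ v')) :=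
        (hperm.append_left _).append_left x
      _ = x ++ ((a :: rest.map Prod.fst) ++ v') := by simp
      _ ~ (a :: rest.map Prod.fst) ++ (x ++ v') := swap_append_perm_aux ..
      _ = ((a, Γ1) :: rest).map Prod.fst ++ (x ++ v') := by simp
    · intro t ht
      rcases List.mem_append.1 ht with h | h
      · exact Or.inl (hx t h)
      · rcases hv' t h with h' | h'
        · exact Or.inr ⟨(a, Γ1), List.mem_cons_self, h'⟩
        · rcases h' with ⟨q, hq, hq'⟩
          exact Or.inr ⟨q, List.mem_cons_of_mem _ hq, hq'⟩

lemma split_list_aux {α : Type} {Γ0 S : Set α} : ∀ {v : List α},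
    (∀ x ∈ v, x ∈ Γ0 ∪ S) →
    ∃ v0 v1, v.Perm (v0 ++ v1) ∧ (∀ x ∈ v0, x ∈ Γ0) ∧ (∀ x ∈ v1, x ∈ S) := by
  intro v
  induction v with
  | nil => exact fun _ => ⟨[], [], by simp, by simp, by simp⟩
  | cons a v ih =>
    intro h
    rcases ih (fun x hx => h x (List.mem_cons_of_mem _ hx)) with ⟨v0, v1, hp, h0, h1⟩
    rcases h a (List.mem_cons_self) with ha | ha
    · exact ⟨a :: v0, v1, hp.cons a, by
        intro x hx; rcases List.mem_cons.1 hx with rfl | hx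
        exacts [ha, h0 x hx], h1⟩
    · refine ⟨v0, a :: v1, (hp.cons a).trans List.perm_middle.symm, h0, ?_⟩
      intro x hx; rcases List.mem_cons.1 hx with rfl | hx
      exacts [ha, h1 x hx]

/-- Characterization (backward): any permutation of marker word ++ (word over union
alphabet) is a permutation of some word in the atom. -/
lemma perm_atom_aux {α : Type} : ∀ {rest : List (α × Set α)} {Γ0 : Set α} {w v : List α},
    w.Perm (rest.map Prod.fst ++ v) →
    (∀ x ∈ v, x ∈ Γ0 ∪ {x | ∃ q ∈ rest, x ∈ q.2}) →
    ∃ u ∈ apcAtom Γ0 rest, w.Perm u := by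
  intro rest
  induction rest with
  | nil =>
    intro Γ0 w v hperm hv
    refine ⟨v, ?_, by simpa using hperm⟩
    intro x hx
    rcases hv x hx with h | h
    · exact h
    · rcases h with ⟨q, hq, _⟩; simp at hq
  | cons p rest ih =>
    rcases p with ⟨a, Γ1⟩
    intro Γ0 w v hperm hv
    have hv' : ∀ x ∈ v, x ∈ Γ0 ∪ (Γ1 ∪ {x | ∃ q ∈ rest, x ∈ q.2}) := by
      intro x hx
      rcases hv x hx with h | h
      · exact Or.inl h
      · rcases h with ⟨q, hq, hq'⟩
        rcases List.mem_cons.1 hq with rfl | hq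
        · exact Or.inr (Or.inl hq')
        · exact Or.inr (Or.inr ⟨q, hq, hq'⟩)
    rcases split_list_aux hv' with ⟨v0, v1, hsplit, h0, h1⟩
    rcases ih (v := v1) (Γ0 := Γ1) (w := rest.map Prod.fst ++ v1) .rfl h1
      with ⟨u', hu', hpu'⟩
    refine ⟨v0 ++ ([a] ++ u'), ⟨v0, h0, [a] ++ u', ⟨[a], rfl, u', hu', rfl⟩, rfl⟩, ?_⟩
    calc w ~ ((a, Γ1) :: rest).map Prod.fst ++ v := hperm
    _ = a :: (rest.map Prod.fst ++ v) := by simp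
    _ ~ a :: (rest.map Prod.fst ++ (v0 ++ v1)) := (hsplit.append_left _).cons a
    _ ~ a :: (v0 ++ (rest.map Prod.fst ++ v1)) :=
        (swap_append_perm_aux v0 (rest.map Prod.fst) v1).symm.cons a
    _ ~ a :: (v0 ++ u') := (hpu'.append_left v0).cons a
    _ ~ v0 ++ (a :: u') := List.perm_middle.symm
    _ = v0 ++ ([a] ++ u') := by simp

/-- Prepending a letter of `Γ0` preserves atom membership. -/
lemma cons_atom_aux {α : Type} {Γ0 : Set α} {l : List (α × Set α)} {a : α} {w : List α}
    (ha : a ∈ Γ0) (hw : w ∈ apcAtom Γ0 l) : (a :: w) ∈ apcAtom Γ0 l := by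
  cases l with
  | nil =>
    intro x hx
    rcases List.mem_cons.1 hx with rfl | hx
    exacts [ha, hw x hx]
  | cons p rest =>
    rcases p with ⟨b, Γ1⟩
    rcases hw with ⟨x, hx, y, hy, rfl⟩
    refine ⟨a :: x, ?_, y, hy, rfl⟩
    intro t ht
    rcases List.mem_cons.1 ht with rfl | ht
    exacts [ha, hx t ht]

lemma shuffle_atom_aux {α : Type} {Γ : Set α} : ∀ {u v w : List α},
    IsShuffle u v w → (∀ x ∈ v, x ∈ Γ) →
    w ∈ apcAtom Γ (u.map (fun a => (a, Γ))) := by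
  intro u v w h
  induction h with
  | nil => exact fun _ => by intro x hx; simp at hx
  | @left u v w a h ih =>
    intro hv
    exact ⟨[], by simp [subStar], [a] ++ w, ⟨[a], rfl, w, ih hv, rfl⟩, by simp⟩
  | @right u v w a h ih =>
    intro hv
    exact cons_atom_aux (hv a (List.mem_cons_self))
      (ih fun x hx => hv x (List.mem_cons_of_mem _ hx))

/-- For an APC `L = ⋃ᵢ Σ₀⁽ⁱ⁾* a₁⁽ⁱ⁾ ⋯ aₙᵢ⁽ⁱ⁾ Σₙᵢ⁽ⁱ⁾*`,
`perm(L) = ⋃ᵢ perm(a₁⁽ⁱ⁾ ⋯ aₙᵢ⁽ⁱ⁾) ⧢ Γ⁽ⁱ⁾*` where `Γ⁽ⁱ⁾ = Σ₀⁽ⁱ⁾ ∪ … ∪ Σₙᵢ⁽ⁱ⁾`;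
in particular `perm(L)` is again an APC. -/
theorem stmt10 {α : Type} (parts : List (Set α × List (α × Set α)))
    (L : Language α) (hL : L = {w | ∃ p ∈ parts, w ∈ apcAtom p.1 p.2}) :
    permCl L = {w | ∃ p ∈ parts,
        w ∈ lshuffle (permCl ({p.2.map Prod.fst} : Language α))
              (subStar (p.1 ∪ {x | ∃ q ∈ p.2, x ∈ q.2}))}
    ∧ IsAPC (permCl L) := by
  subst hL
  have key : permCl {w | ∃ p ∈ parts, w ∈ apcAtom p.1 p.2} = {w | ∃ p ∈ parts,
      w ∈ lshuffle (permCl ({p.2.map Prod.fst} : Language α))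
        (subStar (p.1 ∪ {x | ∃ q ∈ p.2, x ∈ q.2}))} := by
    ext w
    constructor
    · rintro ⟨t, ⟨p, hp, ht⟩, hperm⟩
      rcases atom_perm_aux ht with ⟨v, htp, hv⟩
      rcases perm_append_shuffle_aux (hperm.trans htp) with ⟨u', v', hu', hv', hs⟩
      exact ⟨p, hp, u', ⟨p.2.map Prod.fst, rfl, hu'⟩, v',
        fun x hx => hv x (hv'.mem_iff.1 hx), hs⟩
    · rintro ⟨p, hp, u, hu, v, hv, hs⟩
      rcases hu with ⟨t, ht, hut⟩
      rcases ht
      have hwp : w.Perm (p.2.map Prod.fst ++ v) :=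
        (shuffle_perm_aux hs).trans (hut.append_right v)
      rcases perm_atom_aux hwp hv with ⟨u', hu', hwu'⟩
      exact ⟨u', ⟨p, hp, hu'⟩, hwu'⟩
  refine ⟨key, ?_⟩
  refine ⟨parts.flatMap (fun p =>
    ((p.2.map Prod.fst).permutations).map (fun s =>
      ((p.1 ∪ {x | ∃ q ∈ p.2, x ∈ q.2}),
        s.map (fun a => (a, p.1 ∪ {x | ∃ q ∈ p.2, x ∈ q.2}))))), ?_⟩
  rw [key]
  ext w
  simp only [Set.mem_setOf_eq, List.mem_flatMap, List.mem_map]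
  constructor
  · rintro ⟨p, hp, u, hu, v, hv, hs⟩
    rcases hu with ⟨t, ht, hut⟩
    rcases ht
    refine ⟨_, ⟨p, hp, u, List.mem_permutations.2 hut, rfl⟩, ?_⟩
    exact shuffle_atom_aux hs hv
  · rintro ⟨p', ⟨p, hp, σ, hσ, rfl⟩, hw⟩
    have hσp : σ.Perm (p.2.map Prod.fst) := List.mem_permutations.1 hσ
    set Γ := p.1 ∪ {x | ∃ q ∈ p.2, x ∈ q.2} with hΓ
    rcases atom_perm_aux hw with ⟨v, hperm, hv⟩
    have hmap : (σ.map (fun a => (a, Γ))).map Prod.fst = σ := by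
      simp [Function.comp_def]
    rw [hmap] at hperm
    have hvΓ : ∀ x ∈ v, x ∈ Γ := by
      intro x hx
      rcases hv x hx with h | h
      · exact h
      · rcases h with ⟨q, hq, hq'⟩
        rcases List.mem_map.1 hq with ⟨b, _, rfl⟩
        exact hq'
    rcases perm_append_shuffle_aux hperm with ⟨u', v', hu', hv', hs⟩
    exact ⟨p, hp, u', ⟨p.2.map Prod.fst, rfl, hu'.trans hσp⟩, v',
      fun x hx => hvΓ x (hv'.mem_iff.1 hx), hs⟩
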